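/- arXiv:2505.18628 — 2 statements merged into one kernel-verified Lean document; each statement's English description precedes it below -/
import Mathlib

section
/- Let n, K be positive integers, let Â ∈ M_n(ℂ) be a Hermitian positive semidefinite matrix, and let a₁, …, a_K ∈ ℂⁿ with a_k ≠ 0 for at least one k. For μ > 0 define P(μ) = Σ_{k=1}^{K} ‖(Â + μ·I)⁻¹ a_k‖², where I is the n×n identity matrix (Â + μI is positive definite, hence invertible, for every μ > 0). Then P is strictly decreasing on (0, ∞): for all μ₁ > μ₂ > 0, P(μ₁) < P(μ₂). -/
open Matrix Finset
open scoped ComplexOrder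

private lemma posDef_real_smul {n : ℕ} {c : ℝ} (hc : 0 < c) {M : Matrix (Fin n) (Fin n) ℂ}
    (hM : M.PosDef) : ((c : ℂ) • M).PosDef := by
  refine Matrix.PosDef.of_dotProduct_mulVec_pos ?_ fun x hx => ?_
  · show ((c : ℂ) • M)ᴴ = _
    rw [conjTranspose_smul, hM.1.eq]
    norm_num
  · rw [smul_mulVec, dotProduct_smul, smul_eq_mul]
    exact mul_pos (by exact_mod_cast hc) (hM.dotProduct_mulVec_pos hx)

private lemma posDef_conj {n : ℕ} {M C : Matrix (Fin n) (Fin n) ℂ} (hM : M.PosDef)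
    (hC : IsUnit C) : (Cᴴ * M * C).PosDef := by
  refine Matrix.PosDef.of_dotProduct_mulVec_pos (Matrix.isHermitian_conjTranspose_mul_mul C hM.1) fun x hx => ?_
  have hnz : C *ᵥ x ≠ 0 := fun h => hx <|
    (Matrix.mulVec_injective_iff_isUnit.mpr hC) (h.trans (Matrix.mulVec_zero C).symm)
  simpa only [star_mulVec, dotProduct_mulVec, vecMul_vecMul] using hM.dotProduct_mulVec_pos hnz

private lemma sum_norm_sq {n : ℕ} (v : Fin n → ℂ) :
    ∑ i, ‖v i‖ ^ 2 = (star v ⬝ᵥ v).re := by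
  simp [dotProduct, Complex.re_sum, ← Complex.normSq_eq_norm_sq, Complex.normSq_eq_conj_mul_self, Complex.normSq_apply]

private lemma cancel_aux {n : ℕ} {X Y : Matrix (Fin n) (Fin n) ℂ} [Invertible X] [Invertible Y] :
    (Y⁻¹ * X⁻¹) * (X * X) * (X⁻¹ * Y⁻¹) = Y⁻¹ * Y⁻¹ := by
  simp only [Matrix.mul_assoc]
  rw [Matrix.inv_mul_cancel_left_of_invertible, Matrix.mul_inv_cancel_left_of_invertible]

/-- Theorem 1: the total power `P(μ) = ∑ₖ ‖(Â + μ I)⁻¹ aₖ‖²` is strictly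
decreasing on `(0, ∞)`. -/
theorem power_strictly_decreasing {n K : ℕ} (hn : 0 < n) (hK : 0 < K)
    (A : Matrix (Fin n) (Fin n) ℂ) (hA : A.PosSemidef)
    (a : Fin K → (Fin n → ℂ)) (ha : ∃ k, a k ≠ 0)
    (P : ℝ → ℝ)
    (hP : ∀ μ : ℝ, P μ = ∑ k : Fin K, ∑ i : Fin n,
      ‖((A + (μ : ℂ) • (1 : Matrix (Fin n) (Fin n) ℂ))⁻¹ *ᵥ a k) i‖ ^ 2) :
    ∀ μ₁ μ₂ : ℝ, 0 < μ₂ → μ₂ < μ₁ → P μ₁ < P μ₂ := by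
  intro μ₁ μ₂ hμ₂ hlt
  have hμ₁ : 0 < μ₁ := hμ₂.trans hlt
  have hB : ∀ μ : ℝ, 0 < μ → (A + (μ : ℂ) • (1 : Matrix (Fin n) (Fin n) ℂ)).PosDef :=
    fun μ hμ => Matrix.PosDef.posSemidef_add hA (posDef_real_smul hμ Matrix.PosDef.one)
  set B₁ : Matrix (Fin n) (Fin n) ℂ := A + (μ₁ : ℂ) • 1 with hB₁def
  set B₂ : Matrix (Fin n) (Fin n) ℂ := A + (μ₂ : ℂ) • 1 with hB₂def
  have hB₁ : B₁.PosDef := hB μ₁ hμ₁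
  have hB₂ : B₂.PosDef := hB μ₂ hμ₂
  letI := hB₁.isUnit.invertible
  letI := hB₂.isUnit.invertible
  have hc : B₁ * B₂ = B₂ * B₁ := by
    simp only [hB₁def, hB₂def, add_mul, mul_add, smul_mul_assoc, mul_smul_comm,
      Matrix.one_mul, Matrix.mul_one, smul_smul, smul_add]
    module
  have hg : B₁⁻¹ * B₂⁻¹ = B₂⁻¹ * B₁⁻¹ := by
    rw [← Matrix.mul_inv_rev, ← Matrix.mul_inv_rev, hc]
  have t1 : (B₂⁻¹ * B₁⁻¹) * (B₁ * B₁) * (B₁⁻¹ * B₂⁻¹) = B₂⁻¹ * B₂⁻¹ := cancel_aux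
  have t2 : (B₂⁻¹ * B₁⁻¹) * (B₂ * B₂) * (B₁⁻¹ * B₂⁻¹) = B₁⁻¹ * B₁⁻¹ := by
    nth_rewrite 1 [← hg]
    nth_rewrite 2 [hg]
    exact cancel_aux
  have hM : B₁ * B₁ - B₂ * B₂ = (((μ₁ - μ₂ : ℝ)) : ℂ) • (B₁ + B₂) := by
    simp only [hB₁def, hB₂def]
    push_cast
    simp only [add_mul, mul_add, smul_mul_assoc, mul_smul_comm, Matrix.one_mul,
      Matrix.mul_one, smul_smul, smul_add]
    match_scalars <;> ring
  have hMpd : (B₁ * B₁ - B₂ * B₂).PosDef := by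
    rw [hM]; exact posDef_real_smul (sub_pos.mpr hlt) (hB₁.add hB₂)
  have hCunit : IsUnit (B₁⁻¹ * B₂⁻¹) := hB₁.inv.isUnit.mul hB₂.inv.isUnit
  have hCH : (B₁⁻¹ * B₂⁻¹)ᴴ = B₂⁻¹ * B₁⁻¹ := by
    rw [conjTranspose_mul, hB₁.isHermitian.inv, hB₂.isHermitian.inv]
  have hDpd : (B₂⁻¹ * B₂⁻¹ - B₁⁻¹ * B₁⁻¹).PosDef := by
    have hD : B₂⁻¹ * B₂⁻¹ - B₁⁻¹ * B₁⁻¹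
        = (B₁⁻¹ * B₂⁻¹)ᴴ * (B₁ * B₁ - B₂ * B₂) * (B₁⁻¹ * B₂⁻¹) := by
      rw [hCH, Matrix.mul_sub, Matrix.sub_mul, t1, t2]
    rw [hD]; exact posDef_conj hMpd hCunit
  have key : ∀ (B : Matrix (Fin n) (Fin n) ℂ), B⁻¹.IsHermitian → ∀ x : Fin n → ℂ,
      ∑ i, ‖(B⁻¹ *ᵥ x) i‖ ^ 2 = (star x ⬝ᵥ ((B⁻¹ * B⁻¹) *ᵥ x)).re := by
    intro B hH x
    rw [sum_norm_sq]
    congr 1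
    rw [star_mulVec, hH, ← Matrix.mulVec_mulVec]
    simp only [Matrix.dotProduct_mulVec, Matrix.vecMul_vecMul]
  have hsub : P μ₂ - P μ₁
      = ∑ k, (star (a k) ⬝ᵥ ((B₂⁻¹ * B₂⁻¹ - B₁⁻¹ * B₁⁻¹) *ᵥ a k)).re := by
    rw [hP, hP, ← Finset.sum_sub_distrib]
    refine Finset.sum_congr rfl fun k _ => ?_
    rw [key B₂ hB₂.isHermitian.inv, key B₁ hB₁.isHermitian.inv,
      Matrix.sub_mulVec, dotProduct_sub, Complex.sub_re]
  have hpos : 0 < P μ₂ - P μ₁ := by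
    rw [hsub]
    obtain ⟨k₀, hk₀⟩ := ha
    refine Finset.sum_pos' (fun k _ => ?_) ⟨k₀, Finset.mem_univ _, ?_⟩
    · simpa using hDpd.posSemidef.re_dotProduct_nonneg (a k)
    · simpa using hDpd.re_dotProduct_pos hk₀
  linarith
end

section
/- Let K be a positive integer, g ∈ ℂ^K, σ² > 0, and fix k ∈ {1, …, K}. Define E : ℂ → ℝ by E(u) = |u|²·(Σ_{j≠k} |g_j|² + σ²) + |ū·g_k − 1|². Then log₂(1 + |g_k|² / (Σ_{j≠k} |g_j|² + σ²)) = (1/ln 2) · sup_{W > 0, u ∈ ℂ} (ln W − W·E(u) + 1), and the supremum is attained at u* = g_k / (Σ_j |g_j|² + σ²) and W* = E(u*)⁻¹. -/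
open Finset

/-- MMSE rate representation: the rate `log₂(1 + SINRₖ)` equals
`(1/ln 2) · sup_{W>0, u∈ℂ} (ln W − W·E(u) + 1)`, attained at
`u* = gₖ/(∑ⱼ|gⱼ|² + σ²)` and `W* = E(u*)⁻¹`. -/
theorem mmse_rate_representation {K : ℕ} (hK : 0 < K) (g : Fin K → ℂ)
    (σsq : ℝ) (hσ : 0 < σsq) (k : Fin K)
    (E : ℂ → ℝ)
    (hE : ∀ u : ℂ, E u =
      ‖u‖ ^ 2 * ((∑ j ∈ Finset.univ.erase k, ‖g j‖ ^ 2) + σsq)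
        + ‖(starRingEnd ℂ) u * g k - 1‖ ^ 2)
    (ustar : ℂ) (hustar : ustar = g k / (((∑ j : Fin K, ‖g j‖ ^ 2) + σsq : ℝ) : ℂ))
    (Wstar : ℝ) (hWstar : Wstar = (E ustar)⁻¹) :
    Real.logb 2 (1 + ‖g k‖ ^ 2 / ((∑ j ∈ Finset.univ.erase k, ‖g j‖ ^ 2) + σsq))
        = (1 / Real.log 2) * (Real.log Wstar - Wstar * E ustar + 1) ∧
    IsGreatest {y : ℝ | ∃ W : ℝ, 0 < W ∧ ∃ u : ℂ, y = Real.log W - W * E u + 1}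
      (Real.log Wstar - Wstar * E ustar + 1) := by
  set S : ℝ := (∑ j ∈ Finset.univ.erase k, ‖g j‖ ^ 2) + σsq with hS
  set T : ℝ := (∑ j : Fin K, ‖g j‖ ^ 2) + σsq with hT
  have hsum : (∑ j ∈ Finset.univ.erase k, ‖g j‖ ^ 2) + ‖g k‖ ^ 2
      = ∑ j : Fin K, ‖g j‖ ^ 2 := Finset.sum_erase_add _ _ (Finset.mem_univ k)
  have hSpos : 0 < S := by
    have : (0:ℝ) ≤ ∑ j ∈ Finset.univ.erase k, ‖g j‖ ^ 2 := by positivity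
    linarith
  have hTS : T = S + ‖g k‖ ^ 2 := by rw [hT, hS, ← hsum]; ring
  have hTpos : 0 < T := by
    have : (0:ℝ) ≤ ‖g k‖ ^ 2 := by positivity
    linarith
  have hT0 : (T:ℂ) ≠ 0 := by exact_mod_cast Complex.ofReal_ne_zero.mpr hTpos.ne'
  have hnsq : ∀ z : ℂ, ‖z‖ ^ 2 = z.re ^ 2 + z.im ^ 2 := by
    intro z
    rw [Complex.sq_norm, Complex.normSq_apply]
    · ring
  have hkey : ∀ u : ℂ, E u = T * ‖u - ustar‖ ^ 2 + S / T := by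
    intro u
    have ha : ‖g k‖ ^ 2 = (g k).re ^ 2 + (g k).im ^ 2 := hnsq (g k)
    rw [hE, hustar, hnsq, hnsq, hnsq]
    rw [ha] at hTS
    simp only [Complex.sub_re, Complex.sub_im, Complex.mul_re, Complex.mul_im,
      Complex.conj_re, Complex.conj_im, Complex.div_re, Complex.div_im,
      Complex.ofReal_re, Complex.ofReal_im, Complex.one_re, Complex.one_im,
      Complex.normSq_apply]
    rw [hTS]
    field_simp
    ring
  have hEstar : E ustar = S / T := by
    have := hkey ustar
    simpa using this
  have hWval : Wstar = T / S := by
    rw [hWstar, hEstar, inv_div]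
  have hval : Real.log Wstar - Wstar * E ustar + 1 = Real.log (T / S) := by
    rw [hWval, hEstar]
    have : T / S * (S / T) = 1 := by field_simp
    rw [this]; ring
  constructor
  · rw [Real.logb, hval]
    have h1 : 1 + ‖g k‖ ^ 2 / S = T / S := by
      rw [hTS]; field_simp
    rw [h1]; ring
  · constructor
    · exact ⟨Wstar, by rw [hWval]; positivity, ustar, rfl⟩
    · rintro y ⟨W, hW, u, rfl⟩
      rw [hval]
      have hEu : S / T ≤ E u := by
        have h := hkey u
        nlinarith [sq_nonneg ‖u - ustar‖, hTpos]
      have hlog : Real.log (W * (S / T)) ≤ W * (S / T) - 1 :=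
        Real.log_le_sub_one_of_pos (by positivity)
      rw [Real.log_mul hW.ne' (by positivity)] at hlog
      have h2 : W * (S / T) ≤ W * E u := by
        exact mul_le_mul_of_nonneg_left hEu hW.le
      have h3 : Real.log (S / T) = Real.log S - Real.log T :=
        Real.log_div hSpos.ne' hTpos.ne'
      have h4 : Real.log (T / S) = Real.log T - Real.log S :=
        Real.log_div hTpos.ne' hSpos.ne'
      linarith
end
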